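/- Suppose n+1 ∉ S. Then for every m̄ ∈ ℤ_{≥0}^{n+1} and every N ∈ ℤ_{≥0}, the following identities hold in R: for every 1 ≤ j ≤ n, a_j^{−1}·(m_j+1)·σ_j^{−1}(P'_{m̄+ε_j}(S,a)) = Υ_{m̄}(S,a) if j ∈ S, and a_j^{−1}·(m_j+1)·σ_j^{−1}(P'_{m̄+ε_j}(S,a)) = (h_j − b)·Υ_{m̄}(S,a) if j ∉ S; moreover (m_{n+1}+1)·P'_{m̄+ε_{n+1}}(S,a) = (h_{n+1} + nb)·Υ_{m̄}(S,a). -/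

import Mathlib

open MvPolynomial

/-- The generators `h_1, …, h_n` of `R = ℂ[h_1,…,h_n]`, together with
`h_{n+1} := -(h_1 + ⋯ + h_n)`.  Indices: `i : Fin (n+1)` with `(i : ℕ) < n`
corresponding to `h_1, …, h_n` and `i = Fin.last n` to `h_{n+1}`. -/
noncomputable def Hp (n : ℕ) (i : Fin (n + 1)) : MvPolynomial (Fin n) ℂ :=
  if h : (i : ℕ) < n then X ⟨i, h⟩ else -∑ j : Fin n, X j

/-- The automorphism `σ_i` of `R` determined by `σ_i(h_k) = h_k - δ_{k,i}` for `1 ≤ i ≤ n`,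
and `σ_{n+1} = id`. -/
noncomputable def sigma (n : ℕ) (i : Fin (n + 1)) :
    MvPolynomial (Fin n) ℂ ≃ₐ[ℂ] MvPolynomial (Fin n) ℂ :=
  if h : (i : ℕ) < n then
    AlgEquiv.ofAlgHom
      (aeval fun k => X k - if k = ⟨i, h⟩ then 1 else 0)
      (aeval fun k => X k + if k = ⟨i, h⟩ then 1 else 0)
      (by ext k : 1; by_cases hk : k = ⟨i, h⟩ <;> simp [hk])
      (by ext k : 1; by_cases hk : k = ⟨i, h⟩ <;> simp [hk])
  else AlgEquiv.refl

/-- The scalar `a^{m̄}/m̄!`. -/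
noncomputable def coef (n : ℕ) (a : Fin (n + 1) → ℂ) (m : Fin (n + 1) → ℕ) : ℂ :=
  (∏ j, a j ^ m j) / ((∏ j, (m j).factorial : ℕ) : ℂ)

/-- `P_{m̄}(S,a) = (a^{m̄}/m̄!) ∏_{s ∉ S} ∏_{k=1}^{m_s} (h_s - b - k)`. -/
noncomputable def Pm (n : ℕ) (b : ℂ) (S : Finset (Fin (n + 1))) (a : Fin (n + 1) → ℂ)
    (m : Fin (n + 1) → ℕ) : MvPolynomial (Fin n) ℂ :=
  coef n a m • ∏ s ∈ Sᶜ, ∏ k ∈ Finset.range (m s), (Hp n s - C (b + k + 1))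

/-- `P'_{m̄}(S,a) = (a^{m̄}/m̄!) ∏_{s∉S, s≠n+1} ∏_{k=1}^{m_s}(h_s - b - k) ⋅ C ⋅`
`∏_{t=1}^{m_{n+1}}(h_{n+1} + nb - t + 1)`, where
`C = ∏_{r=1}^{N-m_{n+1}}(h_{n+1} - b - 1 + r)` if `n+1 ∈ S` and `C = 1` otherwise. -/
noncomputable def P' (n : ℕ) (b : ℂ) (S : Finset (Fin (n + 1))) (a : Fin (n + 1) → ℂ)
    (N : ℕ) (m : Fin (n + 1) → ℕ) : MvPolynomial (Fin n) ℂ :=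
  coef n a m •
    ((∏ s ∈ Sᶜ.erase (Fin.last n), ∏ k ∈ Finset.range (m s), (Hp n s - C (b + k + 1)))
      * (if Fin.last n ∈ S then
            ∏ r ∈ Finset.range (N - m (Fin.last n)), (Hp n (Fin.last n) - C (b - r))
          else 1)
      * ∏ t ∈ Finset.range (m (Fin.last n)), (Hp n (Fin.last n) + C ((n : ℂ) * b - t)))

/-- `Δ_{m̄}(S,a) = (a^{m̄}/m̄!) ∏_{s∉S} ∏_{k=1}^{m_s}(h_s - b - k) ⋅`
`∏_{r=2}^{N-m_{n+1}}(h_{n+1} - b - 2 + r) ⋅ ∏_{t=1}^{m_{n+1}}(h_{n+1} + nb - t)`. -/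
noncomputable def Δm (n : ℕ) (b : ℂ) (S : Finset (Fin (n + 1))) (a : Fin (n + 1) → ℂ)
    (N : ℕ) (m : Fin (n + 1) → ℕ) : MvPolynomial (Fin n) ℂ :=
  coef n a m •
    ((∏ s ∈ Sᶜ, ∏ k ∈ Finset.range (m s), (Hp n s - C (b + k + 1)))
      * (∏ r ∈ Finset.range (N - m (Fin.last n) - 1), (Hp n (Fin.last n) - C (b - r)))
      * ∏ t ∈ Finset.range (m (Fin.last n)), (Hp n (Fin.last n) + C ((n : ℂ) * b - t - 1)))

/-- `Θ_{m̄}(S,a) = (a^{m̄}/m̄!) ∏_{s∉S, s≠n+1} ∏_{k=1}^{m_s}(h_s - b - k) ⋅`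
`∏_{k=1}^{m_{n+1}}(h_{n+1} - b - k - 1)`. -/
noncomputable def Θm (n : ℕ) (b : ℂ) (S : Finset (Fin (n + 1))) (a : Fin (n + 1) → ℂ)
    (m : Fin (n + 1) → ℕ) : MvPolynomial (Fin n) ℂ :=
  coef n a m •
    ((∏ s ∈ Sᶜ.erase (Fin.last n), ∏ k ∈ Finset.range (m s), (Hp n s - C (b + k + 1)))
      * ∏ k ∈ Finset.range (m (Fin.last n)), (Hp n (Fin.last n) - C (b + k + 2)))

/-- `Υ_{m̄}(S,a) = (a^{m̄}/m̄!) ∏_{s∉S, s≠n+1} ∏_{k=1}^{m_s}(h_s - b - k) ⋅`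
`∏_{t=1}^{m_{n+1}}(h_{n+1} + nb - t)`. -/
noncomputable def Υm (n : ℕ) (b : ℂ) (S : Finset (Fin (n + 1))) (a : Fin (n + 1) → ℂ)
    (m : Fin (n + 1) → ℕ) : MvPolynomial (Fin n) ℂ :=
  coef n a m •
    ((∏ s ∈ Sᶜ.erase (Fin.last n), ∏ k ∈ Finset.range (m s), (Hp n s - C (b + k + 1)))
      * ∏ t ∈ Finset.range (m (Fin.last n)), (Hp n (Fin.last n) + C ((n : ℂ) * b - t - 1)))

/-- `h̄_i = h_i - δ_{i,n+1}`. -/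
noncomputable def Hbar (n : ℕ) (i : Fin (n + 1)) : MvPolynomial (Fin n) ℂ :=
  Hp n i - if i = Fin.last n then 1 else 0

/-- The `(n+1) × (n+1)` matrix `A(λ,b,S,N)` with entries in `R`:
`A_{ii} = h̄_i - λ - N + 2` and, for `i ≠ j`,
`A_{ij} = (δ_{i∈S} + δ_{i∉S}(h̄_i - b)) (δ_{j∈S}(h̄_j - b) + δ_{j∉S})`. -/
noncomputable def Amat (n : ℕ) (lam b : ℂ) (S : Finset (Fin (n + 1))) (N : ℕ) :
    Matrix (Fin (n + 1)) (Fin (n + 1)) (MvPolynomial (Fin n) ℂ) :=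
  fun i j =>
    if i = j then Hbar n i - C (lam + N - 2)
    else (if i ∈ S then 1 else Hbar n i - C b) * (if j ∈ S then Hbar n j - C b else 1)


lemma sigma_symm_apply (n : ℕ) (j : Fin (n+1)) (hj : (j:ℕ) < n) (p : MvPolynomial (Fin n) ℂ) :
    (sigma n j).symm p = aeval (fun k => X k + if k = ⟨j, hj⟩ then 1 else 0) p := by
  simp [sigma, dif_pos hj]

lemma hp_last (n : ℕ) : Hp n (Fin.last n) = -∑ j : Fin n, X j := by simp [Hp]

lemma hp_lt (n : ℕ) (s : Fin (n+1)) (hs : (s:ℕ) < n) : Hp n s = X ⟨s, hs⟩ := by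
  simp [Hp, hs]

lemma sigma_symm_Hp (n : ℕ) (j : Fin (n+1)) (hj : (j:ℕ) < n) (s : Fin (n+1)) :
    (sigma n j).symm (Hp n s)
      = Hp n s + C (if s = j then 1 else if s = Fin.last n then -1 else 0) := by
  rw [sigma_symm_apply n j hj]
  by_cases hs : (s:ℕ) < n
  · rw [hp_lt n s hs]
    have hsl : s ≠ Fin.last n := by
      intro h; rw [h] at hs; simp [Fin.last] at hs
    by_cases hsj : s = j
    · subst hsj; simp [aeval_X]
    · have : (⟨(s:ℕ), hs⟩ : Fin n) ≠ ⟨j, hj⟩ := by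
        intro h
        exact hsj (Fin.ext (by simpa using congrArg Fin.val h))
      simp [aeval_X, this, hsj, hsl]
  · have hsl : s = Fin.last n := by
      apply Fin.ext
      simp [Fin.last]; have := s.isLt; omega
    have hsj : s ≠ j := by intro h; rw [h] at hs; exact hs hj
    subst hsl
    rw [hp_last]
    simp [hsj, Finset.sum_add_distrib, Finset.sum_ite_eq']
    ring

lemma sigma_symm_C (n : ℕ) (j : Fin (n+1)) (c : ℂ) :
    (sigma n j).symm (C c) = C c := by
  rw [← MvPolynomial.algebraMap_eq]
  exact (sigma n j).symm.commutes c

lemma coef_update (n : ℕ) (a : Fin (n+1) → ℂ) (m : Fin (n+1) → ℕ) (j : Fin (n+1)) :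
    coef n a (fun l => m l + if l = j then 1 else 0)
      = (a j * ((m j : ℂ) + 1)⁻¹) * coef n a m := by
  unfold coef
  have h1 : ∏ l, a l ^ (m l + if l = j then 1 else 0) = a j * ∏ l, a l ^ m l := by
    rw [show (∏ l, a l ^ (m l + if l = j then 1 else 0))
        = ∏ l, ((if l = j then a l else 1) * a l ^ m l) from
      Finset.prod_congr rfl (fun l _ => by split <;> simp [pow_succ] <;> ring)]
    rw [Finset.prod_mul_distrib, Finset.prod_ite_eq' Finset.univ j a]
    simp
  have h2 : (∏ l, (m l + if l = j then 1 else 0).factorial)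
      = (m j + 1) * ∏ l, (m l).factorial := by
    rw [show (∏ l, (m l + if l = j then 1 else 0).factorial)
        = ∏ l, ((if l = j then m l + 1 else 1) * (m l).factorial) from
      Finset.prod_congr rfl (fun l _ => by split <;> simp [Nat.factorial_succ])]
    rw [Finset.prod_mul_distrib, Finset.prod_ite_eq' Finset.univ j (fun l => m l + 1)]
    simp
  rw [h1, h2]
  have hf : ((∏ l, (m l).factorial : ℕ) : ℂ) ≠ 0 :=
    Nat.cast_ne_zero.mpr (Finset.prod_ne_zero_iff.mpr
      (fun l _ => (Nat.factorial_pos (m l)).ne'))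
  have hm1 : ((m j : ℂ) + 1) ≠ 0 := Nat.cast_add_one_ne_zero (m j)
  push_cast
  field_simp

/-- Lemma 7(2), second family of identities (`n+1 ∉ S`): for every `m̄` and `N`, for `1 ≤ j ≤ n`,
`a_j⁻¹ (m_j+1) σ_j⁻¹(P'_{m̄+ε_j}(S,a)) = Υ_{m̄}(S,a)` if `j ∈ S`,
`= (h_j - b) Υ_{m̄}(S,a)` if `j ∉ S`; moreover
`(m_{n+1}+1) P'_{m̄+ε_{n+1}}(S,a) = (h_{n+1} + nb) Υ_{m̄}(S,a)`. -/
theorem statement15 (n : ℕ) (hn : 1 ≤ n) (b : ℂ) (S : Finset (Fin (n + 1)))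
    (a : Fin (n + 1) → ℂ) (ha : ∀ j, a j ≠ 0) (halast : a (Fin.last n) = 1)
    (hS : Fin.last n ∉ S) (m : Fin (n + 1) → ℕ) (N : ℕ) :
    (∀ j : Fin (n + 1), (j : ℕ) < n →
      ((a j)⁻¹ * (m j + 1 : ℂ)) •
          (sigma n j).symm (P' n b S a N (fun l => m l + if l = j then 1 else 0))
        = if j ∈ S then Υm n b S a m else (Hp n j - C b) * Υm n b S a m) ∧
    (m (Fin.last n) + 1 : ℂ) •
        P' n b S a N (fun l => m l + if l = Fin.last n then 1 else 0)
      = (Hp n (Fin.last n) + C ((n : ℂ) * b)) * Υm n b S a m := by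
  constructor
  · intro j hj
    have hjl : j ≠ Fin.last n := by
      intro h; rw [h] at hj; simp [Fin.last] at hj
    have hlj : Fin.last n ≠ j := hjl.symm
    have hm1 : ((m j : ℂ) + 1) ≠ 0 := Nat.cast_add_one_ne_zero (m j)
    have hcoef : ((a j)⁻¹ * ((m j : ℂ) + 1))
          * coef n a (fun l => m l + if l = j then 1 else 0) = coef n a m := by
      rw [coef_update]
      field_simp [ha j]
    have hG : (sigma n j).symm
        (∏ t ∈ Finset.range (m (Fin.last n)), (Hp n (Fin.last n) + C ((n:ℂ)*b - t)))
        = ∏ t ∈ Finset.range (m (Fin.last n)), (Hp n (Fin.last n) + C ((n:ℂ)*b - t - 1)) := by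
      rw [map_prod]
      refine Finset.prod_congr rfl fun t _ => ?_
      rw [map_add, sigma_symm_Hp n j hj, sigma_symm_C, if_neg hlj, if_pos rfl,
        add_assoc, ← C_add, show (-1 + ((n:ℂ)*b - t)) = (n:ℂ)*b - t - 1 by ring]
    simp only [P', Υm, if_neg hS, mul_one, if_neg hlj, add_zero]
    by_cases hjS : j ∈ S
    · rw [if_pos hjS]
      have hF : (sigma n j).symm
          (∏ s ∈ Sᶜ.erase (Fin.last n), ∏ k ∈ Finset.range (m s + if s = j then 1 else 0),
            (Hp n s - C (b + k + 1)))
          = ∏ s ∈ Sᶜ.erase (Fin.last n), ∏ k ∈ Finset.range (m s),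
            (Hp n s - C (b + k + 1)) := by
        rw [map_prod]
        refine Finset.prod_congr rfl fun s hs => ?_
        have hsl : s ≠ Fin.last n := Finset.ne_of_mem_erase hs
        have hsj : s ≠ j := by
          rintro rfl; exact (Finset.mem_compl.mp (Finset.mem_of_mem_erase hs)) hjS
        rw [map_prod]
        refine Finset.prod_congr (by simp [hsj]) fun k _ => ?_
        rw [map_sub, sigma_symm_Hp n j hj, sigma_symm_C, if_neg hsj, if_neg hsl]
        simp
      rw [map_smul, smul_smul, hcoef, map_mul, hF, hG]
    · rw [if_neg hjS]
      have hjT : j ∈ Sᶜ.erase (Fin.last n) :=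
        Finset.mem_erase.mpr ⟨hjl, Finset.mem_compl.mpr hjS⟩
      have hsplit : (∏ s ∈ Sᶜ.erase (Fin.last n),
            ∏ k ∈ Finset.range (m s + if s = j then 1 else 0), (Hp n s - C (b + k + 1)))
          = (∏ k ∈ Finset.range (m j + 1), (Hp n j - C (b + k + 1)))
            * ∏ s ∈ (Sᶜ.erase (Fin.last n)).erase j,
                ∏ k ∈ Finset.range (m s), (Hp n s - C (b + k + 1)) := by
        rw [← Finset.mul_prod_erase _ _ hjT]
        congr 1
        · simp
        · refine Finset.prod_congr rfl fun s hs => ?_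
          have hsj : s ≠ j := Finset.ne_of_mem_erase hs
          simp [hsj]
      have hFm : (∏ s ∈ Sᶜ.erase (Fin.last n),
            ∏ k ∈ Finset.range (m s), (Hp n s - C (b + k + 1)))
          = (∏ k ∈ Finset.range (m j), (Hp n j - C (b + k + 1)))
            * ∏ s ∈ (Sᶜ.erase (Fin.last n)).erase j,
                ∏ k ∈ Finset.range (m s), (Hp n s - C (b + k + 1)) :=
        (Finset.mul_prod_erase _ _ hjT).symm
      have hfj : (sigma n j).symm (∏ k ∈ Finset.range (m j + 1), (Hp n j - C (b + k + 1)))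
          = (Hp n j - C b) * ∏ k ∈ Finset.range (m j), (Hp n j - C (b + k + 1)) := by
        rw [map_prod]
        rw [show (∏ k ∈ Finset.range (m j + 1), (sigma n j).symm (Hp n j - C (b + k + 1)))
            = ∏ k ∈ Finset.range (m j + 1), (Hp n j - C (b + k)) from
          Finset.prod_congr rfl fun k _ => by
            rw [map_sub, sigma_symm_Hp n j hj, sigma_symm_C, if_pos rfl, add_sub_assoc,
              ← C_sub, show (1:ℂ) - (b + k + 1) = -(b + k) by ring, C_neg, ← sub_eq_add_neg]]
        rw [Finset.prod_range_succ', mul_comm]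
        congr 1
        · simp
        · refine Finset.prod_congr rfl fun k _ => ?_
          push_cast
          ring_nf
      have hRest : (sigma n j).symm (∏ s ∈ (Sᶜ.erase (Fin.last n)).erase j,
            ∏ k ∈ Finset.range (m s), (Hp n s - C (b + k + 1)))
          = ∏ s ∈ (Sᶜ.erase (Fin.last n)).erase j,
              ∏ k ∈ Finset.range (m s), (Hp n s - C (b + k + 1)) := by
        rw [map_prod]
        refine Finset.prod_congr rfl fun s hs => ?_
        have hsj : s ≠ j := Finset.ne_of_mem_erase hs
        have hsl : s ≠ Fin.last n := Finset.ne_of_mem_erase (Finset.mem_of_mem_erase hs)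
        rw [map_prod]
        refine Finset.prod_congr rfl fun k _ => ?_
        rw [map_sub, sigma_symm_Hp n j hj, sigma_symm_C, if_neg hsj, if_neg hsl]
        simp
      rw [map_smul, smul_smul, hcoef, map_mul, hsplit, map_mul, hfj, hG, hFm, hRest,
        smul_eq_C_mul, smul_eq_C_mul]
      ring
  · have hcoef2 : ((m (Fin.last n) : ℂ) + 1)
        * coef n a (fun l => m l + if l = Fin.last n then 1 else 0) = coef n a m := by
      rw [coef_update, halast]
      have hm1 : ((m (Fin.last n) : ℂ) + 1) ≠ 0 := Nat.cast_add_one_ne_zero _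
      field_simp
    have hF2 : (∏ s ∈ Sᶜ.erase (Fin.last n),
          ∏ k ∈ Finset.range (m s + if s = Fin.last n then 1 else 0), (Hp n s - C (b + k + 1)))
        = ∏ s ∈ Sᶜ.erase (Fin.last n), ∏ k ∈ Finset.range (m s), (Hp n s - C (b + k + 1)) := by
      refine Finset.prod_congr rfl fun s hs => ?_
      have hsl : s ≠ Fin.last n := Finset.ne_of_mem_erase hs
      simp [hsl]
    have hG2 : (∏ t ∈ Finset.range (m (Fin.last n) + 1), (Hp n (Fin.last n) + C ((n:ℂ)*b - t)))
        = (Hp n (Fin.last n) + C ((n:ℂ)*b))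
          * ∏ t ∈ Finset.range (m (Fin.last n)), (Hp n (Fin.last n) + C ((n:ℂ)*b - t - 1)) := by
      rw [Finset.prod_range_succ', mul_comm]
      congr 1
      · simp
      · refine Finset.prod_congr rfl fun t _ => ?_
        push_cast
        ring_nf
    simp only [P', Υm, if_neg hS, mul_one, if_pos rfl, eq_self_iff_true, if_true]
    rw [smul_smul, hcoef2, hF2, hG2, smul_eq_C_mul, smul_eq_C_mul]
    ring
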